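/- Let (X, ρ) be a metric space, λ ∈ Δ∞, and let x = (x_k)_{k∈ℕ} and g = (g_k)_{k∈ℕ} be two λ-statistically Cauchy sequences in X. Then the real sequence (ρ(x_k, g_k))_{k∈ℕ} is λ-statistically Cauchy in ℝ with the usual metric. (This is the paper's Theorem 3.10, specialized to the PM space induced by a metric, where F_{xy} = ε_{ρ(x,y)} and the strong topology is the metric topology.) -/

import Mathlib

open Filter Topology

/-- `l` belongs to the class `Δ∞`: a nondecreasing (for indices `≥ 1`) sequence of
positive reals tending to `∞` with `l 1 = 1` and `l (n+1) ≤ l n + 1`. -/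
def DeltaInfty (l : ℕ → ℝ) : Prop :=
  (∀ n, 1 ≤ n → 0 < l n) ∧ (∀ m n, 1 ≤ m → m ≤ n → l m ≤ l n) ∧
    Tendsto l atTop atTop ∧ l 1 = 1 ∧ ∀ n, 1 ≤ n → l (n + 1) ≤ l n + 1

open Classical in
/-- The number of elements of `M` in the window `I_n = [n - l n + 1, n] ∩ ℕ`. -/
noncomputable def lamCount (l : ℕ → ℝ) (M : Set ℕ) (n : ℕ) : ℕ :=
  ((Finset.Icc 1 n).filter (fun (k : ℕ) => ((n : ℝ) - l n + 1 ≤ (k : ℝ)) ∧ k ∈ M)).card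

/-- `M ⊆ ℕ` has `λ`-density `r`: `|{k ∈ I_n : k ∈ M}| / l n → r`. -/
def lamDensity (l : ℕ → ℝ) (M : Set ℕ) (r : ℝ) : Prop :=
  Tendsto (fun n => (lamCount l M n : ℝ) / l n) atTop (𝓝 r)

/-- `x` is `λ`-statistically Cauchy in the metric space `X`. -/
def LamStatCauchy {X : Type*} [MetricSpace X] (l : ℕ → ℝ) (x : ℕ → X) : Prop :=
  ∀ η > 0, ∃ N₀ : ℕ, lamDensity l {k | η ≤ dist (x k) (x N₀)} 0

lemma lamCount_mono (l : ℕ → ℝ) {M M' : Set ℕ} (h : M ⊆ M') (n : ℕ) :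
    lamCount l M n ≤ lamCount l M' n := by
  classical
  unfold lamCount
  apply Finset.card_le_card
  intro k hk
  simp only [Finset.mem_filter] at *
  exact ⟨hk.1, hk.2.1, h hk.2.2⟩

lemma lamDensity_zero_of_subset {l : ℕ → ℝ} (hl : DeltaInfty l) {M M' : Set ℕ}
    (h : M ⊆ M') (hM' : lamDensity l M' 0) : lamDensity l M 0 := by
  apply squeeze_zero' (g := fun n => (lamCount l M' n : ℝ) / l n) ?_ ?_ hM'
  · filter_upwards [eventually_ge_atTop 1] with n hn
    apply div_nonneg (by positivity) (hl.1 n hn).le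
  · filter_upwards [eventually_ge_atTop 1] with n hn
    have := hl.1 n hn
    gcongr
    exact_mod_cast lamCount_mono l h n

lemma lamDensity_zero_union {l : ℕ → ℝ} (hl : DeltaInfty l) {A B : Set ℕ}
    (hA : lamDensity l A 0) (hB : lamDensity l B 0) : lamDensity l (A ∪ B) 0 := by
  have hle : ∀ n, lamCount l (A ∪ B) n ≤ lamCount l A n + lamCount l B n := by
    intro n
    classical
    unfold lamCount
    refine le_trans (Finset.card_le_card ?_) (Finset.card_union_le _ _)
    intro k hk
    simp only [Finset.mem_filter, Finset.mem_union, Set.mem_union] at *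
    tauto
  have h0 : Tendsto (fun n => (lamCount l A n : ℝ) / l n + (lamCount l B n : ℝ) / l n)
      atTop (𝓝 0) := by
    simpa using hA.add hB
  apply squeeze_zero' ?_ ?_ h0
  · filter_upwards [eventually_ge_atTop 1] with n hn
    have := hl.1 n hn
    positivity
  · filter_upwards [eventually_ge_atTop 1] with n hn
    have hlpos := hl.1 n hn
    rw [← add_div]
    gcongr
    exact_mod_cast hle n

lemma DeltaInfty.one_le {l : ℕ → ℝ} (hl : DeltaInfty l) {n : ℕ} (hn : 1 ≤ n) : 1 ≤ l n := by
  have := hl.2.1 1 n le_rfl hn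
  rw [hl.2.2.2.1] at this
  exact this

lemma DeltaInfty.le_nat {l : ℕ → ℝ} (hl : DeltaInfty l) {n : ℕ} (hn : 1 ≤ n) : l n ≤ n := by
  induction n with
  | zero => omega
  | succ m ih =>
    rcases Nat.eq_or_lt_of_le hn with h | h
    · rw [← h]; simp [hl.2.2.2.1]
    · have hm : 1 ≤ m := by omega
      have := hl.2.2.2.2 m hm
      push_cast
      linarith [ih hm]

lemma lamCount_univ_ge {l : ℕ → ℝ} (hl : DeltaInfty l) {n : ℕ} (hn : 1 ≤ n) :
    l n - 1 ≤ (lamCount l Set.univ n : ℝ) := by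
  classical
  have h1 : 1 ≤ l n := hl.one_le hn
  have h2 : l n ≤ n := hl.le_nat hn
  set a := ⌈(n : ℝ) - l n + 1⌉₊ with ha
  have hval_pos : (0 : ℝ) ≤ (n : ℝ) - l n + 1 := by linarith
  have ha1 : 1 ≤ a := by
    rw [ha, Nat.one_le_ceil_iff]
    linarith
  have han : a ≤ n := by
    rw [ha, Nat.ceil_le]
    push_cast
    linarith
  have hcard : n + 1 - a ≤ lamCount l Set.univ n := by
    unfold lamCount
    rw [← Nat.card_Icc a n]
    apply Finset.card_le_card
    intro k hk
    simp only [Finset.mem_Icc, Finset.mem_filter, Set.mem_univ, and_true] at *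
    refine ⟨⟨le_trans ha1 hk.1, hk.2⟩, ?_⟩
    have : (n : ℝ) - l n + 1 ≤ a := Nat.le_ceil _
    exact this.trans (by exact_mod_cast hk.1)
  have hac : (a : ℝ) < (n : ℝ) - l n + 1 + 1 := Nat.ceil_lt_add_one hval_pos
  have : ((n + 1 - a : ℕ) : ℝ) ≤ (lamCount l Set.univ n : ℝ) := by exact_mod_cast hcard
  have hcast : ((n + 1 - a : ℕ) : ℝ) = (n : ℝ) + 1 - a := by
    have : a ≤ n + 1 := by omega
    push_cast [Nat.cast_sub this]
    ring
  rw [hcast] at this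
  linarith

/-- If two sets have λ-density zero, their union has nonempty complement. -/
lemma exists_not_mem {l : ℕ → ℝ} (hl : DeltaInfty l) {A B : Set ℕ}
    (hA : lamDensity l A 0) (hB : lamDensity l B 0) : ∃ N, N ∉ A ∧ N ∉ B := by
  by_contra hcon
  push_neg at hcon
  have huniv : (Set.univ : Set ℕ) ⊆ A ∪ B := by
    intro k _
    rcases Classical.em (k ∈ A) with h | h
    · exact Or.inl h
    · exact Or.inr (hcon k h)
  have hdu : lamDensity l Set.univ 0 :=
    lamDensity_zero_of_subset hl huniv (lamDensity_zero_union hl hA hB)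
  have hlow : Tendsto (fun n => 1 - 1 / l n) atTop (𝓝 1) := by
    have : Tendsto (fun n => 1 / l n) atTop (𝓝 0) :=
      Tendsto.div_atTop tendsto_const_nhds hl.2.2.1
    simpa using (tendsto_const_nhds (x := (1:ℝ))).sub this
  have hle : ∀ᶠ n in atTop, (1 : ℝ) - 1 / l n ≤ (lamCount l Set.univ n : ℝ) / l n := by
    filter_upwards [eventually_ge_atTop 1] with n hn
    have hlpos := hl.1 n hn
    have : (l n - 1) / l n ≤ (lamCount l Set.univ n : ℝ) / l n := by
      gcongr
      exact lamCount_univ_ge hl hn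
    calc (1:ℝ) - 1 / l n = (l n - 1) / l n := by
          field_simp
      _ ≤ _ := this
  have := le_of_tendsto_of_tendsto hlow hdu hle
  linarith

theorem dist_of_lamStatCauchy_is_lamStatCauchy {X : Type*} [MetricSpace X]
    (l : ℕ → ℝ) (hl : DeltaInfty l) (x g : ℕ → X)
    (hx : LamStatCauchy l x) (hg : LamStatCauchy l g) :
    LamStatCauchy l (fun k => dist (x k) (g k)) := by
  intro η hη
  obtain ⟨N₁, hN₁⟩ := hx (η / 4) (by linarith)
  obtain ⟨N₂, hN₂⟩ := hg (η / 4) (by linarith)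
  set A := {k | η / 4 ≤ dist (x k) (x N₁)} with hA
  set B := {k | η / 4 ≤ dist (g k) (g N₂)} with hB
  obtain ⟨N₀, hN₀A, hN₀B⟩ := exists_not_mem hl hN₁ hN₂
  refine ⟨N₀, ?_⟩
  have hsub : {k | η ≤ dist (dist (x k) (g k)) (dist (x N₀) (g N₀))} ⊆ A ∪ B := by
    intro k hk
    by_contra hkn
    simp only [Set.mem_union, not_or] at hkn
    obtain ⟨hkA, hkB⟩ := hkn
    simp only [hA, hB, Set.mem_setOf_eq, not_le] at hkA hkB hN₀A hN₀B
    have h1 : dist (dist (x k) (g k)) (dist (x N₀) (g N₀)) ≤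
        dist (x k) (x N₀) + dist (g k) (g N₀) := dist_dist_dist_le _ _ _ _
    have h2 : dist (x k) (x N₀) ≤ dist (x k) (x N₁) + dist (x N₀) (x N₁) :=
      dist_triangle_right _ _ _
    have h3 : dist (g k) (g N₀) ≤ dist (g k) (g N₂) + dist (g N₀) (g N₂) :=
      dist_triangle_right _ _ _
    have hk' : η ≤ dist (dist (x k) (g k)) (dist (x N₀) (g N₀)) := hk
    linarith
  exact lamDensity_zero_of_subset hl hsub (lamDensity_zero_union hl hN₁ hN₂)
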